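/- arXiv:2210.05497 — 2 statements merged into one kernel-verified Lean document; each statement's English description precedes it below -/
import Mathlib

section
/- Let X_1, …, X_k be i.i.d. standard normal random variables and set Z = Σ_{j=1}^k X_j². Then for any t > 0, P(Z − k ≥ 2√(k t) + 2t) ≤ exp(−t). -/
open MeasureTheory ProbabilityTheory Real
open scoped NNReal ENNReal

lemma my_log_ineq {u : ℝ} (hu0 : 0 ≤ u) (hu1 : u < 1) :
    -Real.log (1 - u) ≤ u + u ^ 2 / (2 * (1 - u)) := by
  have h1u : (0:ℝ) < 1 - u := by linarith
  have hlog := Real.hasSum_pow_div_log_of_abs_lt_one (x := u) (by rw [abs_of_nonneg hu0]; exact hu1)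
  set g : ℕ → ℝ := fun n => if n = 0 then u else u ^ (n + 1) / 2 with hg
  have hgeom : HasSum (fun n : ℕ => u ^ 2 / 2 * u ^ n) (u ^ 2 / 2 * (1 - u)⁻¹) :=
    (hasSum_geometric_of_lt_one hu0 hu1).mul_left _
  have hg1 : HasSum (fun n : ℕ => g (n + 1)) (u ^ 2 / (2 * (1 - u))) := by
    have : (fun n : ℕ => g (n + 1)) = fun n : ℕ => u ^ 2 / 2 * u ^ n := by
      funext n; simp only [hg, Nat.succ_ne_zero, if_false]; ring
    rw [this]
    convert hgeom using 1
    field_simp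
  have hgsum : HasSum g (u + u ^ 2 / (2 * (1 - u))) := by
    rw [← hasSum_nat_add_iff' 1]
    simpa [hg] using hg1
  have hle : ∀ n : ℕ, u ^ (n + 1) / (n + 1) ≤ g n := by
    intro n
    cases n with
    | zero => simp [hg]
    | succ m =>
      simp only [hg, Nat.succ_ne_zero, if_false]
      have hp : (0:ℝ) ≤ u ^ (m + 1 + 1) := pow_nonneg hu0 _
      have h2 : (2:ℝ) ≤ (m + 1 : ℕ) + 1 := by push_cast; linarith [Nat.cast_nonneg (α := ℝ) m]
      exact div_le_div_of_nonneg_left hp two_pos h2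
  exact hasSum_le hle hlog hgsum
open scoped NNReal ENNReal

lemma my_gauss_pdf_mul (l : ℝ) (hl : l < 1/2) (x : ℝ) :
    gaussianPDFReal 0 1 x * Real.exp (l * x ^ 2)
      = (Real.sqrt (2 * Real.pi))⁻¹ * Real.exp (-((1 - 2*l)/2) * x ^ 2) := by
  rw [gaussianPDFReal]
  push_cast
  rw [mul_assoc, ← Real.exp_add]
  ring_nf

lemma my_gauss_integrable (l : ℝ) (hl : l < 1/2) :
    Integrable (fun x => Real.exp (l * x ^ 2)) (gaussianReal 0 1) := by
  rw [gaussianReal_of_var_ne_zero _ one_ne_zero]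
  have hmeq : gaussianPDF 0 1 = fun x => ((Real.toNNReal (gaussianPDFReal 0 1 x) : ℝ≥0) : ℝ≥0∞) := rfl
  rw [hmeq, integrable_withDensity_iff_integrable_smul]
  · have : (fun x => (Real.toNNReal (gaussianPDFReal 0 1 x) : ℝ≥0) • Real.exp (l * x ^ 2))
        = fun x => (Real.sqrt (2 * Real.pi))⁻¹ * Real.exp (-((1 - 2*l)/2) * x ^ 2) := by
      funext x
      rw [NNReal.smul_def, smul_eq_mul, Real.coe_toNNReal _ (gaussianPDFReal_nonneg 0 1 x),
        my_gauss_pdf_mul l hl x]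
    rw [this]
    exact (integrable_exp_neg_mul_sq (by linarith)).const_mul _
  · exact (measurable_gaussianPDFReal 0 1).real_toNNReal

lemma my_gauss_integral (l : ℝ) (hl : l < 1/2) :
    ∫ x, Real.exp (l * x ^ 2) ∂(gaussianReal 0 1) = (Real.sqrt (1 - 2*l))⁻¹ := by
  rw [gaussianReal_of_var_ne_zero _ one_ne_zero]
  have hmeq : gaussianPDF 0 1 = fun x => ((Real.toNNReal (gaussianPDFReal 0 1 x) : ℝ≥0) : ℝ≥0∞) := rfl
  rw [hmeq, integral_withDensity_eq_integral_smul ((measurable_gaussianPDFReal 0 1).real_toNNReal)]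
  have : (fun x => (Real.toNNReal (gaussianPDFReal 0 1 x) : ℝ≥0) • Real.exp (l * x ^ 2))
      = fun x => (Real.sqrt (2 * Real.pi))⁻¹ * Real.exp (-((1 - 2*l)/2) * x ^ 2) := by
    funext x
    rw [NNReal.smul_def, smul_eq_mul, Real.coe_toNNReal _ (gaussianPDFReal_nonneg 0 1 x),
      my_gauss_pdf_mul l hl x]
  rw [this, MeasureTheory.integral_const_mul, integral_gaussian]
  have hπ : (0:ℝ) < 2 * Real.pi := by positivity
  have hb : (0:ℝ) < (1 - 2*l)/2 := by linarith
  rw [← Real.sqrt_inv, ← Real.sqrt_inv, ← Real.sqrt_mul (by positivity : (0:ℝ) ≤ (2*Real.pi)⁻¹)]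
  congr 1
  have h1 : (1 : ℝ) - 2*l ≠ 0 := by linarith
  have hπ0 : Real.pi ≠ 0 := Real.pi_ne_zero
  have h2 : (1 : ℝ) - l * 2 ≠ 0 := by linarith
  field_simp

open MeasureTheory ProbabilityTheory

theorem stmt_11 (k : ℕ) (Ω : Type*) [MeasurableSpace Ω] (μ : Measure Ω)
    [IsProbabilityMeasure μ] (X : Fin k → Ω → ℝ)
    (hmeas : ∀ j, Measurable (X j))
    (hindep : iIndepFun X μ)
    (hdist : ∀ j, μ.map (X j) = gaussianReal 0 1)
    (t : ℝ) (ht : 0 < t) :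
    μ {ω | 2 * Real.sqrt (k * t) + 2 * t ≤ (∑ j, (X j ω) ^ 2) - k}
      ≤ ENNReal.ofReal (Real.exp (-t)) := by
  rcases Nat.eq_zero_or_pos k with hk0 | hkpos
  · subst hk0
    have hempty : {ω | 2 * Real.sqrt ((0:ℕ) * t) + 2 * t ≤ (∑ j : Fin 0, (X j ω) ^ 2) - (0:ℕ)} = ∅ := by
      ext ω
      simp only [Set.mem_setOf_eq, Finset.univ_eq_empty, Finset.sum_empty, Nat.cast_zero,
        zero_mul, Real.sqrt_zero, mul_zero, sub_zero, Set.mem_empty_iff_false, iff_false, not_le]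
      linarith
    rw [hempty, measure_empty]
    exact zero_le
  -- setup
  set a := Real.sqrt k with ha_def
  set b := Real.sqrt t with hb_def
  have hkpos' : (0:ℝ) < k := by exact_mod_cast hkpos
  have ha : 0 < a := Real.sqrt_pos.mpr hkpos'
  have hb : 0 < b := Real.sqrt_pos.mpr ht
  have ha2 : a ^ 2 = k := Real.sq_sqrt hkpos'.le
  have hb2 : b ^ 2 = t := Real.sq_sqrt ht.le
  have hab : (0:ℝ) < a + 2 * b := by linarith
  set l := b / (a + 2 * b) with hl_def
  have hl0 : 0 < l := div_pos hb hab
  have hl : l < 1 / 2 := by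
    rw [hl_def, div_lt_div_iff₀ hab (by norm_num : (0:ℝ) < 2)]
    linarith
  have h2l : 0 < 1 - 2 * l := by linarith
  set s := 2 * Real.sqrt (k * t) + 2 * t with hs_def
  have hs : s = 2 * a * b + 2 * b ^ 2 := by
    rw [hs_def, Real.sqrt_mul (Nat.cast_nonneg k) t, ← ha_def, ← hb_def, hb2]; ring
  -- the squared variables
  set Y : Fin k → Ω → ℝ := fun j ω => (X j ω) ^ 2 with hY_def
  have hYmeas : ∀ j, Measurable (Y j) := fun j => (hmeas j).pow_const 2
  have hYindep : iIndepFun Y μ :=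
    hindep.comp (fun _ (x : ℝ) => x ^ 2) (fun _ => measurable_id.pow_const 2)
  have hint_j : ∀ j, Integrable (fun ω => Real.exp (l * Y j ω)) μ := by
    intro j
    have h := my_gauss_integrable l hl
    rw [← hdist j] at h
    exact (integrable_map_measure
      ((Real.measurable_exp.comp (measurable_const.mul (measurable_id.pow_const 2))).aestronglyMeasurable)
      (hmeas j).aemeasurable).mp h
  have hmgf_j : ∀ j, mgf (Y j) μ l = (Real.sqrt (1 - 2 * l))⁻¹ := by
    intro j
    have hmap : ∫ x, Real.exp (l * x ^ 2) ∂(μ.map (X j)) = ∫ ω, Real.exp (l * (X j ω) ^ 2) ∂μ :=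
      integral_map (hmeas j).aemeasurable
        ((Real.measurable_exp.comp (measurable_const.mul (measurable_id.pow_const 2))).aestronglyMeasurable)
    rw [mgf]
    rw [show (fun ω => Real.exp (l * Y j ω)) = fun ω => Real.exp (l * (X j ω) ^ 2) from rfl]
    rw [← hmap, hdist j, my_gauss_integral l hl]
  have hZint : Integrable (fun ω => Real.exp (l * (∑ j, Y j) ω)) μ :=
    hYindep.integrable_exp_mul_sum hYmeas (fun j _ => hint_j j)
  have hch := measure_ge_le_exp_mul_mgf (X := ∑ j, Y j) (μ := μ) ((k : ℝ) + s) hl0.le hZint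
  have hmgf : mgf (∑ j, Y j) μ l = ((Real.sqrt (1 - 2 * l))⁻¹) ^ k := by
    rw [hYindep.mgf_sum hYmeas]
    simp [hmgf_j]
  -- rewrite the event
  have hset : {ω | 2 * Real.sqrt (k * t) + 2 * t ≤ (∑ j, (X j ω) ^ 2) - k}
      = {ω | (k : ℝ) + s ≤ (∑ j, Y j) ω} := by
    ext ω
    simp only [Set.mem_setOf_eq, Finset.sum_apply, ← hs_def]
    constructor <;> intro h <;> [skip; skip] <;> simp only [hY_def] at * <;> linarith
  -- exponent computation
  have key : (k : ℝ) * l ^ 2 / (1 - 2 * l) - l * s = -t := by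
    have h12 : 1 - 2 * l = a / (a + 2 * b) := by
      rw [hl_def]; field_simp; ring
    rw [h12, hs, hl_def, ← ha2, ← hb2]
    field_simp
    ring
  have hlog := my_log_ineq (u := 2 * l) (by linarith) (by linarith)
  have hexp_bound : Real.exp (-l * ((k : ℝ) + s)) * ((Real.sqrt (1 - 2 * l))⁻¹) ^ k
      ≤ Real.exp (-t) := by
    have hsqrt : (Real.sqrt (1 - 2 * l))⁻¹ = Real.exp (-(Real.log (1 - 2 * l) / 2)) := by
      have h1 : Real.sqrt (1 - 2 * l) = Real.exp (Real.log (1 - 2 * l) / 2) := by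
        rw [← Real.log_sqrt h2l.le, Real.exp_log (Real.sqrt_pos.mpr h2l)]
      rw [h1, ← Real.exp_neg]
    rw [hsqrt, ← Real.exp_nat_mul, ← Real.exp_add, Real.exp_le_exp]
    have hmul : (k : ℝ) * (-(Real.log (1 - 2 * l) / 2))
        ≤ (k : ℝ) * l + (k : ℝ) * l ^ 2 / (1 - 2 * l) := by
      have h2 : -(Real.log (1 - 2 * l) / 2) ≤ l + l ^ 2 / (1 - 2 * l) := by
        have : (2 * l) ^ 2 / (2 * (1 - 2 * l)) = 2 * (l ^ 2 / (1 - 2 * l)) := by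
          field_simp
        rw [this] at hlog
        linarith
      calc (k : ℝ) * (-(Real.log (1 - 2 * l) / 2))
          ≤ (k : ℝ) * (l + l ^ 2 / (1 - 2 * l)) :=
            mul_le_mul_of_nonneg_left h2 (Nat.cast_nonneg k)
        _ = (k : ℝ) * l + (k : ℝ) * l ^ 2 / (1 - 2 * l) := by ring
    have hfin : -l * ((k : ℝ) + s) + ((k : ℝ) * l + (k : ℝ) * l ^ 2 / (1 - 2 * l))
        = (k : ℝ) * l ^ 2 / (1 - 2 * l) - l * s := by ring
    linarith [key, hmul, hfin]
  -- conclude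
  rw [hset]
  have hne : μ {ω | (k : ℝ) + s ≤ (∑ j, Y j) ω} ≠ ⊤ := measure_ne_top μ _
  rw [← ENNReal.ofReal_toReal hne]
  apply ENNReal.ofReal_le_ofReal
  calc (μ {ω | (k : ℝ) + s ≤ (∑ j, Y j) ω}).toReal
      ≤ Real.exp (-l * ((k : ℝ) + s)) * mgf (∑ j, Y j) μ l := hch
    _ = Real.exp (-l * ((k : ℝ) + s)) * ((Real.sqrt (1 - 2 * l))⁻¹) ^ k := by rw [hmgf]
    _ ≤ Real.exp (-t) := hexp_bound
end

section
/- Suppose f : ℝ^d → ℝ is differentiable with L-Lipschitz gradient, lower bounded by f*, and consider the deterministic masked-SAM update x_{t+1} = x_t − γ·∇f(x_t + ρ·(∇f(x_t) ⊙ m_t)/‖∇f(x_t)‖) with binary masks m_t ∈ {0,1}^d, step size 0 < γ ≤ 1/(2L), radius ρ > 0, and ∇f(x_t) ≠ 0 for all t. Then (1/T)·Σ_{t=0}^{T−1} ‖∇f(x_t)‖² ≤ C₁·(f(x_0) − f*)/(γT) + C₂·L²ρ² for some absolute constants C₁, C₂ > 0. -/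
/-- The Hadamard (componentwise) product of two vectors in Euclidean space. -/
def hadamard {d : ℕ} (a b : EuclideanSpace ℝ (Fin d)) : EuclideanSpace ℝ (Fin d) :=
  WithLp.toLp 2 (fun j => a j * b j)

open InnerProductSpace in
/-- Descent lemma (with constant `L` instead of the sharp `L/2`). -/
lemma descent_aux {d : ℕ} (f : EuclideanSpace ℝ (Fin d) → ℝ) (L : ℝ)
    (hf : Differentiable ℝ f) (hL0 : 0 ≤ L)
    (hLip : ∀ w v, ‖gradient f w - gradient f v‖ ≤ L * ‖w - v‖)
    (x y : EuclideanSpace ℝ (Fin d)) :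
    f y ≤ f x + inner ℝ (gradient f x) (y - x) + L * ‖y - x‖ ^ 2 := by
  set c := gradient f x with hc
  set φ : EuclideanSpace ℝ (Fin d) → ℝ := fun z => f z - inner ℝ c z with hφ
  have hφ' : ∀ z ∈ segment ℝ x y,
      HasFDerivWithinAt φ (toDual ℝ _ (gradient f z) - toDual ℝ _ c) (segment ℝ x y) z := by
    intro z _
    have h1 : HasFDerivAt f (toDual ℝ _ (gradient f z)) z :=
      ((hf z).hasGradientAt).hasFDerivAt
    have h2 : HasFDerivAt (fun w => inner ℝ c w : EuclideanSpace ℝ (Fin d) → ℝ)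
        (toDual ℝ _ c) z :=
      (toDual ℝ (EuclideanSpace ℝ (Fin d)) c).hasFDerivAt
    exact (h1.sub h2).hasFDerivWithinAt
  have hbound : ∀ z ∈ segment ℝ x y,
      ‖toDual ℝ (EuclideanSpace ℝ (Fin d)) (gradient f z) - toDual ℝ _ c‖ ≤ L * ‖y - x‖ := by
    intro z hz
    rw [← map_sub, (toDual ℝ (EuclideanSpace ℝ (Fin d))).norm_map]
    refine (hLip z x).trans ?_
    gcongr
    obtain ⟨a, b, ha, hb, hab, rfl⟩ := hz
    have : a • x + b • y - x = b • (y - x) := by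
      have : a = 1 - b := by linarith
      subst this
      module
    rw [this, norm_smul, Real.norm_eq_abs, abs_of_nonneg hb]
    exact mul_le_of_le_one_left (norm_nonneg _) (by linarith)
  have key := (convex_segment x y).norm_image_sub_le_of_norm_hasFDerivWithin_le
      hφ' hbound (left_mem_segment ℝ x y) (right_mem_segment ℝ x y)
  have h1 : φ y - φ x ≤ L * ‖y - x‖ * ‖y - x‖ := (le_abs_self _).trans key
  have h2 : (inner ℝ c (y - x) : ℝ) = inner ℝ c y - inner ℝ c x := inner_sub_right c y x
  simp only [hφ] at h1
  nlinarith [sq_nonneg (‖y - x‖)]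

lemma hadamard_norm_le {d : ℕ} (a b : EuclideanSpace ℝ (Fin d))
    (hb : ∀ j, b j = 0 ∨ b j = 1) : ‖hadamard a b‖ ≤ ‖a‖ := by
  rw [EuclideanSpace.norm_eq, EuclideanSpace.norm_eq]
  apply Real.sqrt_le_sqrt
  apply Finset.sum_le_sum
  intro j _
  rcases hb j with h | h <;> simp [hadamard, h] <;> positivity

set_option maxHeartbeats 1000000 in
theorem stmt_14 :
    ∃ C₁ > (0 : ℝ), ∃ C₂ > (0 : ℝ),
      ∀ (d : ℕ) (f : EuclideanSpace ℝ (Fin d) → ℝ) (L fstar γ ρ : ℝ)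
        (x : ℕ → EuclideanSpace ℝ (Fin d)) (m : ℕ → EuclideanSpace ℝ (Fin d)),
        Differentiable ℝ f →
        (0 < L) →
        (∀ w v, ‖gradient f w - gradient f v‖ ≤ L * ‖w - v‖) →
        (∀ w, fstar ≤ f w) →
        (∀ t j, m t j = 0 ∨ m t j = 1) →
        (0 < γ) → (γ ≤ 1 / (2 * L)) → (0 < ρ) →
        (∀ t, gradient f (x t) ≠ 0) →
        (∀ t, x (t + 1) = x t - γ •
          gradient f (x t + (ρ / ‖gradient f (x t)‖) • hadamard (gradient f (x t)) (m t))) →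
        ∀ T : ℕ, 0 < T →
          (1 / (T : ℝ)) * ∑ t ∈ Finset.range T, ‖gradient f (x t)‖ ^ 2
            ≤ C₁ * (f (x 0) - fstar) / (γ * T) + C₂ * L ^ 2 * ρ ^ 2 := by
  refine ⟨4, by norm_num, 18, by norm_num, ?_⟩
  intro d f L fstar γ ρ x m hf hL hLip hlow hm hγ hγL hρ hg hupd T hT
  have hLγ : L * γ ≤ 1 / 2 := by
    rw [le_div_iff₀ (by positivity)] at hγL
    linarith
  -- per-step descent
  have step : ∀ t, (γ / 4) * ‖gradient f (x t)‖ ^ 2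
      ≤ f (x t) - f (x (t + 1)) + (9 / 2) * γ * L ^ 2 * ρ ^ 2 := by
    intro t
    set g := gradient f (x t) with hgdef
    set p := (ρ / ‖g‖) • hadamard g (m t) with hpdef
    set h := gradient f (x t + p) with hhdef
    have hpnorm : ‖p‖ ≤ ρ := by
      rw [hpdef, norm_smul]
      have hg0 : (0:ℝ) < ‖g‖ := norm_pos_iff.mpr (hg t)
      rw [Real.norm_eq_abs, abs_of_nonneg (by positivity)]
      calc ρ / ‖g‖ * ‖hadamard g (m t)‖ ≤ ρ / ‖g‖ * ‖g‖ := by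
            gcongr; exact hadamard_norm_le _ _ (hm t)
        _ = ρ := by field_simp
    have hdiff : ‖h - g‖ ≤ L * ρ := by
      refine (hLip _ _).trans ?_
      have : x t + p - x t = p := by abel
      rw [this]
      exact mul_le_mul_of_nonneg_left hpnorm hL.le
    have hdesc := descent_aux f L hf hL.le hLip (x t) (x (t + 1))
    have hxdiff : x (t + 1) - x t = -(γ • h) := by rw [hupd t]; abel
    rw [hxdiff] at hdesc
    have hinner : (inner ℝ g (-(γ • h)) : ℝ) = -γ * inner ℝ g h := by
      rw [inner_neg_right, real_inner_smul_right]; ring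
    have hnorm : ‖-(γ • h)‖ = γ * ‖h‖ := by
      rw [norm_neg, norm_smul, Real.norm_eq_abs, abs_of_nonneg hγ.le]
    rw [hinner, hnorm] at hdesc
    -- inner g h = ‖g‖² + inner g (h - g)
    have hgh : (inner ℝ g h : ℝ) = ‖g‖ ^ 2 + inner ℝ g (h - g) := by
      rw [inner_sub_right, real_inner_self_eq_norm_sq]; ring
    have habs : |(inner ℝ g (h - g) : ℝ)| ≤ ‖g‖ * (L * ρ) := by
      refine (abs_real_inner_le_norm _ _).trans ?_
      exact mul_le_mul_of_nonneg_left hdiff (norm_nonneg _)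
    have hhn : ‖h‖ ≤ ‖g‖ + L * ρ := by
      calc ‖h‖ = ‖g + (h - g)‖ := by congr 1; abel
        _ ≤ ‖g‖ + ‖h - g‖ := norm_add_le _ _
        _ ≤ ‖g‖ + L * ρ := by linarith
    have hgn : (0:ℝ) ≤ ‖g‖ := norm_nonneg _
    have hhn0 : (0:ℝ) ≤ ‖h‖ := norm_nonneg _
    have habs' := abs_le.mp habs
    have e1 : L * γ * (γ * ‖h‖ ^ 2) ≤ 1 / 2 * (γ * ‖h‖ ^ 2) :=
      mul_le_mul_of_nonneg_right hLγ (by positivity)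
    have e2 : ‖h‖ ^ 2 ≤ (‖g‖ + L * ρ) ^ 2 := by nlinarith
    have e3 : γ * ‖h‖ ^ 2 ≤ γ * (‖g‖ + L * ρ) ^ 2 := by nlinarith
    have e4 : γ * -(‖g‖ * (L * ρ)) ≤ γ * inner ℝ g (h - g) :=
      mul_le_mul_of_nonneg_left habs'.1 hγ.le
    have e5 : 0 ≤ γ * (‖g‖ - 4 * L * ρ) ^ 2 := by positivity
    rw [hgh] at hdesc
    nlinarith [e1, e3, e4, e5, hdesc]
  -- sum the per-step inequality
  have hsum : (γ / 4) * ∑ t ∈ Finset.range T, ‖gradient f (x t)‖ ^ 2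
      ≤ (f (x 0) - fstar) + T * ((9 / 2) * γ * L ^ 2 * ρ ^ 2) := by
    rw [Finset.mul_sum]
    calc ∑ t ∈ Finset.range T, (γ / 4) * ‖gradient f (x t)‖ ^ 2
        ≤ ∑ t ∈ Finset.range T, (f (x t) - f (x (t + 1)) + (9 / 2) * γ * L ^ 2 * ρ ^ 2) :=
          Finset.sum_le_sum fun t _ => step t
      _ = (f (x 0) - f (x T)) + T * ((9 / 2) * γ * L ^ 2 * ρ ^ 2) := by
          rw [Finset.sum_add_distrib, Finset.sum_range_sub' (fun t => f (x t))]
          simp [mul_comm]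
      _ ≤ (f (x 0) - fstar) + T * ((9 / 2) * γ * L ^ 2 * ρ ^ 2) := by
          have := hlow (x T); linarith
  have hT0 : (0:ℝ) < T := by exact_mod_cast hT
  have hγT : (0:ℝ) < γ * T := by positivity
  have h1 : (1 / (T:ℝ)) * ∑ t ∈ Finset.range T, ‖gradient f (x t)‖ ^ 2
      = (∑ t ∈ Finset.range T, ‖gradient f (x t)‖ ^ 2) / T := by ring
  rw [h1, div_add' _ _ _ (ne_of_gt hγT), div_le_div_iff₀ hT0 hγT]
  nlinarith [mul_le_mul_of_nonneg_left hsum hT0.le]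
end
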